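/- (Corollary, no calendar spread arbitrage.) Fix κ ∈ ℝ and let ω : (0, ∞) → (0, ∞) be differentiable and nondecreasing in τ. Then the map τ ↦ p_BS(ω(τ), κ) = exp κ · Φ((κ + ω(τ)²/2)/ω(τ)) − Φ((κ − ω(τ)²/2)/ω(τ)) is nondecreasing on (0, ∞). -/

import Mathlib

open MeasureTheory Real

/-- Standard normal probability density function. -/
noncomputable def stdNormalPDF (z : ℝ) : ℝ := Real.exp (-z ^ 2 / 2) / Real.sqrt (2 * Real.pi)

/-- Standard normal cumulative distribution function. -/
noncomputable def stdNormalCDF (z : ℝ) : ℝ := ∫ u in Set.Iic z, stdNormalPDF u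

lemma stdNormalPDF_pos (z : ℝ) : 0 < stdNormalPDF z := by
  unfold stdNormalPDF
  positivity

lemma stdNormalPDF_continuous : Continuous stdNormalPDF := by
  unfold stdNormalPDF
  fun_prop

lemma stdNormalPDF_integrable : Integrable stdNormalPDF := by
  have h : stdNormalPDF = fun z => Real.exp (-(1/2) * z ^ 2) / Real.sqrt (2 * Real.pi) := by
    funext z; unfold stdNormalPDF; ring_nf
  rw [h]
  exact (integrable_exp_neg_mul_sq (by norm_num)).div_const _

lemma stdNormalCDF_hasDerivAt (z : ℝ) : HasDerivAt stdNormalCDF (stdNormalPDF z) z := by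
  have hkey : ∀ x : ℝ, stdNormalCDF x = stdNormalCDF 0 + ∫ t in (0:ℝ)..x, stdNormalPDF t := by
    intro x
    unfold stdNormalCDF
    rw [← intervalIntegral.integral_Iic_sub_Iic stdNormalPDF_integrable.integrableOn
      stdNormalPDF_integrable.integrableOn]
    ring
  have h : HasDerivAt (fun x => stdNormalCDF 0 + ∫ t in (0:ℝ)..x, stdNormalPDF t)
      (stdNormalPDF z) z := by
    refine HasDerivAt.const_add _ ?_
    exact intervalIntegral.integral_hasDerivAt_right
      stdNormalPDF_integrable.intervalIntegrable
      (stdNormalPDF_continuous.stronglyMeasurableAtFilter _ _)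
      stdNormalPDF_continuous.continuousAt
  exact h.congr_deriv rfl |>.congr_of_eventuallyEq (Filter.Eventually.of_forall hkey) |>.congr_deriv rfl

lemma put_hasDerivAt (κ : ℝ) {w : ℝ} (hw : 0 < w) :
    HasDerivAt (fun w => Real.exp κ * stdNormalCDF ((κ + w ^ 2 / 2) / w)
      - stdNormalCDF ((κ - w ^ 2 / 2) / w)) (stdNormalPDF ((κ - w ^ 2 / 2) / w)) w := by
  have hw' : w ≠ 0 := hw.ne'
  have hnum1 : HasDerivAt (fun w : ℝ => κ + w ^ 2 / 2) w w := by
    have := ((hasDerivAt_pow 2 w).div_const 2).const_add κ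
    refine this.congr_deriv ?_; push_cast; ring
  have hnum2 : HasDerivAt (fun w : ℝ => κ - w ^ 2 / 2) (-w) w := by
    have := ((hasDerivAt_pow 2 w).div_const 2).const_sub κ
    refine this.congr_deriv ?_; push_cast; ring
  have hd1 : HasDerivAt (fun w : ℝ => (κ + w ^ 2 / 2) / w) ((w ^ 2 / 2 - κ) / w ^ 2) w := by
    have := hnum1.div (hasDerivAt_id w) hw'
    refine this.congr_deriv ?_
    simp only [id]; field_simp; ring
  have hd2 : HasDerivAt (fun w : ℝ => (κ - w ^ 2 / 2) / w) ((-(w ^ 2 / 2) - κ) / w ^ 2) w := by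
    have := hnum2.div (hasDerivAt_id w) hw'
    refine this.congr_deriv ?_
    simp only [id]; field_simp; ring
  have h1 : HasDerivAt (fun w : ℝ => stdNormalCDF ((κ + w ^ 2 / 2) / w))
      (stdNormalPDF ((κ + w ^ 2 / 2) / w) * ((w ^ 2 / 2 - κ) / w ^ 2)) w :=
    (stdNormalCDF_hasDerivAt _).comp w hd1
  have h2 : HasDerivAt (fun w : ℝ => stdNormalCDF ((κ - w ^ 2 / 2) / w))
      (stdNormalPDF ((κ - w ^ 2 / 2) / w) * ((-(w ^ 2 / 2) - κ) / w ^ 2)) w :=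
    (stdNormalCDF_hasDerivAt _).comp w hd2
  have h := (h1.const_mul (Real.exp κ)).sub h2
  refine h.congr_deriv (Eq.symm ?_)
  have hid : Real.exp κ * stdNormalPDF ((κ + w ^ 2 / 2) / w)
      = stdNormalPDF ((κ - w ^ 2 / 2) / w) := by
    unfold stdNormalPDF
    rw [mul_div_assoc', ← Real.exp_add]
    congr 1
    field_simp
    ring
  calc stdNormalPDF ((κ - w ^ 2 / 2) / w)
      = Real.exp κ * stdNormalPDF ((κ + w ^ 2 / 2) / w) * ((w ^ 2 / 2 - κ) / w ^ 2)
        - stdNormalPDF ((κ - w ^ 2 / 2) / w) * ((-(w ^ 2 / 2) - κ) / w ^ 2) := by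
        rw [hid]
        field_simp
        ring
    _ = _ := by ring

lemma put_monotone (κ : ℝ) :
    MonotoneOn (fun w => Real.exp κ * stdNormalCDF ((κ + w ^ 2 / 2) / w)
      - stdNormalCDF ((κ - w ^ 2 / 2) / w)) (Set.Ioi (0 : ℝ)) := by
  apply (strictMonoOn_of_deriv_pos (convex_Ioi 0) ?_ ?_).monotoneOn
  · intro x hx
    exact ((put_hasDerivAt κ (by simpa using hx)).differentiableAt.continuousAt).continuousWithinAt
  · intro x hx
    rw [interior_Ioi] at hx
    rw [(put_hasDerivAt κ hx).deriv]
    exact stdNormalPDF_pos _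

theorem no_calendar_spread_arbitrage (κ : ℝ) (ω : ℝ → ℝ)
    (hpos : ∀ τ ∈ Set.Ioi (0 : ℝ), 0 < ω τ)
    (hdiff : ∀ τ ∈ Set.Ioi (0 : ℝ), DifferentiableAt ℝ ω τ)
    (hmono : MonotoneOn ω (Set.Ioi (0 : ℝ))) :
    MonotoneOn
      (fun τ => Real.exp κ * stdNormalCDF ((κ + ω τ ^ 2 / 2) / ω τ)
        - stdNormalCDF ((κ - ω τ ^ 2 / 2) / ω τ))
      (Set.Ioi (0 : ℝ)) := by
  intro a ha b hb hab
  exact put_monotone κ (hpos a ha) (hpos b hb) (hmono ha hb hab)
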